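/- Let K be a finite cubical poset of dimension d and let the degree-0 map γ: C_*(SK) → C_*(SNK) over Z/2 be defined on a flag (a_0 < ··· < a_r) of K as the sum of all flags (e_0 < ··· < e_r) in NK with j(e_i) = a_i for all i, where j(b,c) = b ∨ c. Then for every flag (e_0 < ··· < e_r) in NK there is exactly one flag in SK whose γ-expansion contains it, namely (j(e_0) < ··· < j(e_r)); hence γ applied to the sum of all r-flags of K equals the sum of all r-flags of NK plus the sum of r-flags of the rank-selected part, in the precise form γP_i = (S(NK) + S(NK)_{[d−1,d−i−1]}) ∩ C_i(NK) where P_i = (S(K) + S(K)_{[d,d−i]}) ∩ C_i(K). -/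

import Mathlib

/-- The three-element face poset `I = {0, 1, *}` of an interval. -/
def IntervalFace : Type := Option Bool

instance : PartialOrder IntervalFace where
  le a b := b = none ∨ a = b
  le_refl a := Or.inr rfl
  le_trans a b c hab hbc := by
    rcases hbc with h | h
    · exact Or.inl h
    · exact h ▸ hab
  le_antisymm a b hab hba := by
    rcases hab with h | h
    · rcases hba with h' | h'
      · rw [h, h']
      · exact h'.symm
    · exact h

/-- `b` and `c` form an opposite pair: covered by their join, with no meet. -/
def OppPair {α : Type*} [PartialOrder α] (b c : α) : Prop :=
  b ≠ c ∧ (∃ s : α, IsLUB {b, c} s ∧ b ⋖ s ∧ c ⋖ s) ∧ ¬ ∃ z : α, z ≤ b ∧ z ≤ c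

/-- The poset `NK` of ordered opposite pairs, ordered componentwise. -/
def NKt (K : Type*) [PartialOrder K] : Type _ := {p : K × K // OppPair p.1 p.2}

instance (K : Type*) [PartialOrder K] : PartialOrder (NKt K) :=
  inferInstanceAs (PartialOrder {p : K × K // OppPair p.1 p.2})

instance : Fintype IntervalFace := inferInstanceAs (Fintype (Option Bool))
instance : DecidableEq IntervalFace := inferInstanceAs (DecidableEq (Option Bool))

lemma IF.le_def {a b : IntervalFace} : a ≤ b ↔ b = none ∨ a = b := Iff.rfl

lemma IF.le_none (a : IntervalFace) : a ≤ (none : IntervalFace) := Or.inl rfl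

lemma IF.card : Nat.card IntervalFace = 3 := by
  rw [Nat.card_eq_fintype_card]; rfl

open Classical in
lemma IF.card_Iic (a : IntervalFace) : Nat.card (Set.Iic a) = if a = (none : IntervalFace) then 3 else 1 := by
  by_cases h : a = (none : IntervalFace)
  · rw [if_pos h]
    have huniv : Set.Iic a = Set.univ := by
      ext x; simp only [Set.mem_Iic, Set.mem_univ, iff_true]; rw [h]; exact IF.le_none x
    rw [huniv, ← IF.card]
    exact Nat.card_congr (Equiv.Set.univ _)
  · simp only [if_neg h]
    have : Set.Iic a = {a} := by
      ext x
      simp only [Set.mem_Iic, Set.mem_singleton_iff, IF.le_def]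
      constructor
      · rintro (h' | h')
        · exact absurd h' h
        · exact h'
      · intro h'; exact Or.inr h'
    rw [this]
    exact Nat.card_unique

lemma IF.fcard : Fintype.card IntervalFace = 3 := rfl

def iicPiEquiv {ι : Type*} {α : ι → Type*} [∀ i, Preorder (α i)] (v : ∀ i, α i) :
    Set.Iic v ≃ ∀ i, Set.Iic (v i) where
  toFun w i := ⟨w.1 i, w.2 i⟩
  invFun g := ⟨fun i => (g i).1, fun i => (g i).2⟩
  left_inv w := rfl
  right_inv g := rfl

lemma card_Iic_cubical {K : Type*} [PartialOrder K] (rank : K → ℕ)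
    (hcubical : ∀ x : K, Nonempty (Set.Iic x ≃o (Fin (rank x) → IntervalFace)))
    (x : K) : Nat.card (Set.Iic x) = 3 ^ rank x := by
  obtain ⟨f⟩ := hcubical x
  rw [Nat.card_congr f.toEquiv, Nat.card_eq_fintype_card, Fintype.card_fun]
  simp [IF.fcard]

lemma rank_of_covby {K : Type*} [PartialOrder K] (rank : K → ℕ)
    (hcubical : ∀ x : K, Nonempty (Set.Iic x ≃o (Fin (rank x) → IntervalFace)))
    {b s : K} (h : b ⋖ s) : rank b + 1 = rank s := by
  obtain ⟨f⟩ := hcubical s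
  set n := rank s with hn
  set T : Fin n → IntervalFace := f ⟨s, le_rfl⟩ with hTdef
  have hT : ∀ w : Fin n → IntervalFace, w ≤ T := by
    intro w
    have h1 : f.symm w ≤ (⟨s, le_rfl⟩ : Set.Iic s) := (f.symm w).2
    have := f.le_iff_le.mpr h1
    rwa [f.apply_symm_apply] at this
  have hTnone : ∀ i, T i = none := by
    intro i
    have h1 : T ≤ fun _ => (none : IntervalFace) := fun i => IF.le_none _
    have h2 := hT (fun _ => (none : IntervalFace))
    have := le_antisymm h1 h2
    exact congrFun this i
  set v : Fin n → IntervalFace := f ⟨b, h.le⟩ with hvdef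
  have hvT : v ⋖ T := by
    constructor
    · exact f.lt_iff_lt.mpr (Subtype.mk_lt_mk.mpr h.lt)
    · intro w hvw hwT
      have h1 : (⟨b, h.le⟩ : Set.Iic s) < f.symm w := by
        have := f.symm.lt_iff_lt.mpr hvw
        rwa [f.symm_apply_apply] at this
      have h2 : f.symm w < (⟨s, le_rfl⟩ : Set.Iic s) := by
        have := f.symm.lt_iff_lt.mpr hwT
        rwa [f.symm_apply_apply] at this
      exact h.2 (Subtype.mk_lt_mk.mp (by exact h1)) (Subtype.mk_lt_mk.mp (by exact h2))
  -- v has exactly one non-none coordinate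
  have hvne : v ≠ T := hvT.1.ne
  have hex : ∃ i0, v i0 ≠ T i0 := by
    by_contra hc
    push_neg at hc
    exact hvne (funext hc)
  obtain ⟨i0, hi0'⟩ := hex
  have hi0 : v i0 ≠ (none : IntervalFace) := by rwa [hTnone i0] at hi0' 
  have huniq : ∀ i, i ≠ i0 → v i = (none : IntervalFace) := by
    intro i1 hne1
    by_contra hc
    set w := Function.update v i0 (none : IntervalFace) with hw
    have hvw : v < w := by
      constructor
      · intro i
        by_cases hi : i = i0
        · subst hi; rw [hw, Function.update_self i (none : IntervalFace) v]; exact IF.le_none _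
        · rw [hw, Function.update_of_ne hi (none : IntervalFace) v]
      · intro hle
        have := hle i0
        rw [hw, Function.update_self i0 (none : IntervalFace) v] at this
        rcases this with h' | h'
        · exact hi0 h'
        · exact hi0 h'.symm
    have hwT : w < T := by
      refine lt_of_le_of_ne (hT w) ?_
      intro hwt
      have : w i1 = none := by rw [hwt]; exact hTnone i1
      rw [hw, Function.update_of_ne hne1 (none : IntervalFace) v] at this
      exact hc this
    exact hvT.2 hvw hwT
  -- count Iic v
  have hcardv : Nat.card (Set.Iic v) = 3 ^ (n - 1) := by
    rw [Nat.card_congr (iicPiEquiv v), Nat.card_pi]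
    have : ∀ i, Nat.card (Set.Iic (v i)) = if i = i0 then 1 else 3 := by
      intro i
      rw [IF.card_Iic]
      by_cases hi : i = i0
      · subst hi; rw [if_neg hi0, if_pos rfl]
      · rw [if_pos (huniq i hi), if_neg hi]
    rw [Finset.prod_congr rfl (fun i _ => this i)]
    rw [← Finset.mul_prod_erase Finset.univ _ (Finset.mem_univ i0), if_pos rfl, one_mul]
    rw [Finset.prod_congr rfl (fun i hi => if_neg (Finset.ne_of_mem_erase hi))]
    rw [Finset.prod_const, Finset.card_erase_of_mem (Finset.mem_univ i0),
      Finset.card_univ, Fintype.card_fin]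
  -- transfer count to Iic b
  have hiso : Nat.card (Set.Iic b) = Nat.card (Set.Iic v) := by
    refine Nat.card_congr ⟨fun x => ⟨f ⟨x.1, x.2.trans h.le⟩, ?_⟩,
      fun w => ⟨(f.symm w.1).1, ?_⟩, ?_, ?_⟩
    · exact f.le_iff_le.mpr (Subtype.mk_le_mk.mpr x.2)
    · have h1 : f.symm w.1 ≤ f.symm v := f.symm.le_iff_le.mpr w.2
      have hb' : f.symm v = (⟨b, h.le⟩ : Set.Iic s) := by
        rw [hvdef, f.symm_apply_apply]
      rw [hb'] at h1
      exact h1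
    · intro x
      apply Subtype.ext
      show ((f.symm (f ⟨x.1, x.2.trans h.le⟩)).1 : K) = x.1
      rw [f.symm_apply_apply]
    · intro w
      apply Subtype.ext
      show (f (f.symm w.1) : Fin n → IntervalFace) = w.1
      rw [f.apply_symm_apply]
  have hb3 : (3:ℕ) ^ rank b = 3 ^ (n - 1) := by
    rw [← card_Iic_cubical rank hcubical b, hiso, hcardv]
  have hrb : rank b = n - 1 := Nat.pow_right_injective (by norm_num) hb3
  have hn1 : 1 ≤ n := i0.pos
  omega

/-- The join map `j : NK → K`, `(b,c) ↦ b ∨ c`. -/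
noncomputable def jmap {K : Type*} [PartialOrder K] (e : NKt K) : K :=
  (e.2.2.1).choose

/-- An `r`-flag in a poset: a strictly increasing chain of `r+1` elements. -/
def PosetFlag (α : Type*) [Preorder α] (r : ℕ) : Type _ :=
  {c : Fin (r + 1) → α // StrictMono c}

lemma jmap_spec {K : Type*} [PartialOrder K] (e : NKt K) :
    IsLUB {e.1.1, e.1.2} (jmap e) ∧ e.1.1 ⋖ jmap e ∧ e.1.2 ⋖ jmap e :=
  (e.2.2.1).choose_spec

lemma jmap_strictMono {K : Type*} [PartialOrder K] : StrictMono (jmap (K := K)) := by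
  intro e1 e2 h
  obtain ⟨hlub1, hb1, hc1⟩ := jmap_spec e1
  obtain ⟨hlub2, hb2, hc2⟩ := jmap_spec e2
  have hle : e1.1 ≤ e2.1 := h.le
  have hb12 : e1.1.1 ≤ e2.1.1 := hle.1
  have hc12 : e1.1.2 ≤ e2.1.2 := hle.2
  have hub : jmap e2 ∈ upperBounds {e1.1.1, e1.1.2} := by
    rintro x (rfl | rfl)
    · exact hb12.trans hb2.le
    · exact hc12.trans hc2.le
  refine lt_of_le_of_ne (hlub1.2 hub) ?_
  intro heq
  have hbb : e1.1.1 = e2.1.1 := by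
    rcases eq_or_lt_of_le hb12 with h' | h'
    · exact h'
    · exact absurd (show e2.1.1 < jmap e1 by rw [heq]; exact hb2.lt) (hb1.2 h')
  have hcc : e1.1.2 = e2.1.2 := by
    rcases eq_or_lt_of_le hc12 with h' | h'
    · exact h'
    · exact absurd (show e2.1.2 < jmap e1 by rw [heq]; exact hc2.lt) (hc1.2 h')
  exact h.ne (Subtype.ext (Prod.ext hbb hcc))

/-- For a finite cubical poset `K` of dimension `d`: (1) every flag `e` of `NK`
lies in the `γ`-expansion of exactly one flag of `K`, namely `j ∘ e`; (2) hence
`γ P_i = (S(NK) + S(NK)_{[d−1,d−i−1]}) ∩ C_i(NK)` where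
`P_i = (S(K) + S(K)_{[d,d−i]}) ∩ C_i(K)`: the `i`-flags of `NK` whose `j`-image
flag is not contained in ranks `{d−i,…,d}` are exactly the `i`-flags of `NK`
not contained in `NK`-ranks `{d−i−1,…,d−1}` (the `NK`-rank of `(b,c)` being
the rank of `b`). -/
theorem gamma_of_rank_selected_flags {K : Type*} [PartialOrder K] [Fintype K]
    (rank : K → ℕ) (d : ℕ)
    (hcubical : ∀ x : K, Nonempty (Set.Iic x ≃o (Fin (rank x) → IntervalFace)))
    (hdim : ∀ x : K, rank x ≤ d) :
    (∀ (r : ℕ) (e : PosetFlag (NKt K) r),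
      ∃! a : PosetFlag K r, ∀ m : Fin (r + 1), jmap (e.val m) = a.val m) ∧
    (∀ i : ℕ,
      {e : PosetFlag (NKt K) i | ¬ ∀ m : Fin (i + 1), d - i ≤ rank (jmap (e.val m))}
        = {e : PosetFlag (NKt K) i |
            ¬ ∀ m : Fin (i + 1), d - i - 1 ≤ rank ((e.val m).val.1)}) := by
  
  constructor
  · intro r e
    refine ⟨⟨fun m => jmap (e.1 m), fun m1 m2 hm => jmap_strictMono (e.2 hm)⟩,
      fun m => rfl, ?_⟩
    intro a ha
    exact Subtype.ext (funext fun m => (ha m).symm)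
  · intro i
    ext e
    simp only [Set.mem_setOf_eq]
    have key : ∀ m : Fin (i + 1), rank (jmap (e.1 m)) = rank ((e.1 m).1.1) + 1 :=
      fun m => (rank_of_covby rank hcubical (jmap_spec (e.1 m)).2.1).symm
    have hiff : (∀ m : Fin (i + 1), d - i ≤ rank (jmap (e.1 m))) ↔
        (∀ m : Fin (i + 1), d - i - 1 ≤ rank ((e.1 m).1.1)) := by
      apply forall_congr'
      intro m
      rw [key m]
      omega
    rw [hiff]
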